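/- (Core of the Optimality of Channel-Adaptive Credibility Allocation) Let W ≥ 2, let g : ℝ → ℝ be convex, differentiable and strictly decreasing on [0, W·C] for some budget parameter C > 0, and let reception weights w_1, …, w_W ∈ (0, 1] satisfy w_i ≠ w_j for some indices i, j. Then there exists a channel-adaptive allocation c_1, …, c_W ≥ 0 with Σ_{t=1}^W c_t = W·C such that Σ_{t=1}^W w_t g(c_t) < Σ_{t=1}^W w_t g(C); i.e., some non-uniform allocation of the credibility budget strictly outperforms the static (uniform) allocation c_t ≡ C. -/

import Mathlib

/-- Core of the Optimality of Channel-Adaptive Credibility Allocation: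
for `W ≥ 2` slots, a convex, differentiable, strictly decreasing utility-of-deception
function `g` on `[0, W·C]` with budget `C > 0`, and reception weights `w_t ∈ (0,1]` that
are not all equal, some non-uniform allocation `c` of the total budget `W·C` strictly
outperforms the static allocation `c_t ≡ C`. -/
theorem adaptive_beats_static_allocation
    (W : ℕ) (hW : 2 ≤ W) (C : ℝ) (hC : 0 < C) (g : ℝ → ℝ)
    (hconv : ConvexOn ℝ (Set.Icc 0 ((W : ℝ) * C)) g)
    (hdiff : DifferentiableOn ℝ g (Set.Icc 0 ((W : ℝ) * C)))
    (hanti : StrictAntiOn g (Set.Icc 0 ((W : ℝ) * C)))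
    (w : Fin W → ℝ) (hw : ∀ t, 0 < w t ∧ w t ≤ 1)
    (hne : ∃ i j, w i ≠ w j) :
    ∃ c : Fin W → ℝ, (∀ t, 0 ≤ c t) ∧ (∑ t, c t = (W : ℝ) * C) ∧
      (∑ t, w t * g (c t)) < ∑ t, w t * g C := by
  -- pick i, j with w i < w j
  obtain ⟨i, j, hwij⟩ : ∃ i j, w i < w j := by
    obtain ⟨a, b, hab⟩ := hne
    rcases hab.lt_or_gt with h | h
    exacts [⟨a, b, h⟩, ⟨b, a, h⟩]
  have hij : i ≠ j := by rintro rfl; exact lt_irrefl _ hwij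
  have hW2 : (2 : ℝ) ≤ (W : ℝ) := by exact_mod_cast hW
  have hCWC : C < (W : ℝ) * C := by nlinarith
  have hCmem : C ∈ Set.Icc 0 ((W : ℝ) * C) := ⟨hC.le, hCWC.le⟩
  have hWCmem : ((W : ℝ) * C) ∈ Set.Icc 0 ((W : ℝ) * C) := ⟨by nlinarith, le_refl _⟩
  have hnhds : Set.Icc 0 ((W : ℝ) * C) ∈ nhds C := Icc_mem_nhds hC hCWC
  have hdC : DifferentiableAt ℝ g C := (hdiff C hCmem).differentiableAt hnhds
  set d := deriv g C with hd
  have hderiv : HasDerivAt g d C := hdC.hasDerivAt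
  -- d < 0
  have hdneg : d < 0 := by
    have hs := hconv.deriv_le_slope hCmem hWCmem hCWC hdC
    have hslope : slope g C ((W : ℝ) * C) < 0 := by
      have hg : g ((W : ℝ) * C) < g C := hanti hCmem hWCmem hCWC
      rw [slope_def_field]
      apply div_neg_of_neg_of_pos <;> linarith
    exact lt_of_le_of_lt hs hslope
  -- the perturbation function
  set h : ℝ → ℝ := fun t => w i * g (C - t) + w j * g (C + t) with hhdef
  have hh : HasDerivAt h (d * (w j - w i)) 0 := by
    have h1 : HasDerivAt (fun t : ℝ => g (C - t)) (d * (-1)) 0 := by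
      have hin : HasDerivAt (fun t : ℝ => C - t) (-1) 0 := (hasDerivAt_id 0).const_sub C
      have hout : HasDerivAt g d ((fun t : ℝ => C - t) 0) := by simpa using hderiv
      exact hout.comp 0 hin
    have h2 : HasDerivAt (fun t : ℝ => g (C + t)) (d * 1) 0 := by
      have hin : HasDerivAt (fun t : ℝ => C + t) 1 0 := (hasDerivAt_id 0).const_add C
      have hout : HasDerivAt g d ((fun t : ℝ => C + t) 0) := by simpa using hderiv
      exact hout.comp 0 hin
    have := (h1.const_mul (w i)).add (h2.const_mul (w j))
    exact this.congr_deriv (by ring)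
  have hhneg : d * (w j - w i) < 0 := mul_neg_of_neg_of_pos hdneg (by linarith)
  -- find ε > 0 small with h ε < h 0 and ε < C
  have htend : Filter.Tendsto (slope h 0) (nhdsWithin 0 {(0:ℝ)}ᶜ) (nhds (d * (w j - w i))) :=
    hasDerivAt_iff_tendsto_slope.mp hh
  have htend' : Filter.Tendsto (slope h 0) (nhdsWithin 0 (Set.Ioi 0)) (nhds (d * (w j - w i))) :=
    htend.mono_left (nhdsWithin_mono 0 (fun x hx => by
      simp only [Set.mem_compl_iff, Set.mem_singleton_iff]
      exact ne_of_gt hx))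
  have hev : ∀ᶠ t in nhdsWithin 0 (Set.Ioi 0), slope h 0 t < 0 :=
    htend'.eventually (Filter.Tendsto.eventually_lt_const hhneg Filter.tendsto_id)
  have hev2 : ∀ᶠ t in nhdsWithin (0:ℝ) (Set.Ioi 0), t < C :=
    eventually_nhdsWithin_of_eventually_nhds (Filter.Tendsto.eventually_lt_const hC Filter.tendsto_id)
  have hev3 : ∀ᶠ t in nhdsWithin (0:ℝ) (Set.Ioi 0), t ∈ Set.Ioi (0:ℝ) :=
    eventually_mem_nhdsWithin
  obtain ⟨ε, hε1, hε2, hε3⟩ := (hev.and (hev2.and hev3)).exists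
  have hεpos : 0 < ε := hε3
  have hεC : ε < C := hε2
  -- h ε < h 0
  have hkey : h ε < h 0 := by
    have hsl : (h ε - h 0) / (ε - 0) < 0 := by
      have := hε1; rwa [slope_def_field] at this
    rw [sub_zero] at hsl
    have := (div_lt_iff₀ hεpos).mp hsl
    linarith
  -- construct the allocation
  set c : Fin W → ℝ := fun t => if t = i then C - ε else if t = j then C + ε else C with hcdef
  have hci : c i = C - ε := by simp [hcdef]
  have hcj : c j = C + ε := by simp [hcdef, hij.symm]
  have hco : ∀ t, t ≠ i → t ≠ j → c t = C := by
    intro t h1 h2; simp [hcdef, h1, h2]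
  have hsplit : ∀ F : Fin W → ℝ, (∀ t, t ≠ i → t ≠ j → F t = 0) → ∑ t, F t = F i + F j := by
    intro F hF
    rw [← Finset.sum_pair hij]
    refine (Finset.sum_subset (Finset.subset_univ _) ?_).symm
    intro t _ ht
    simp only [Finset.mem_insert, Finset.mem_singleton, not_or] at ht
    exact hF t ht.1 ht.2
  refine ⟨c, ?_, ?_, ?_⟩
  · intro t
    by_cases h1 : t = i
    · rw [h1, hci]; linarith
    by_cases h2 : t = j
    · rw [h2, hcj]; linarith
    · rw [hco t h1 h2]; exact hC.le
  · have h1 : ∑ t, (c t - C) = 0 := by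
      rw [hsplit _ (fun t h1 h2 => by rw [hco t h1 h2]; ring)]
      rw [hci, hcj]; ring
    have h2 : ∑ t : Fin W, (C : ℝ) = (W : ℝ) * C := by
      rw [Finset.sum_const, Finset.card_univ, Fintype.card_fin, nsmul_eq_mul]
    have h3 : ∑ t, (c t - C) = (∑ t, c t) - ∑ t : Fin W, (C : ℝ) :=
      Finset.sum_sub_distrib _ _
    rw [h2] at h3
    rw [h3] at h1
    linarith
  · have h1 : ∑ t, (w t * g (c t) - w t * g C) = h ε - h 0 := by
      rw [hsplit _ (fun t h1 h2 => by rw [hco t h1 h2]; ring)]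
      rw [hci, hcj, hhdef]; ring
    have h3 : ∑ t, (w t * g (c t) - w t * g C)
        = (∑ t, w t * g (c t)) - ∑ t, w t * g C := Finset.sum_sub_distrib _ _
    rw [h3] at h1
    linarith
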